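/- If an ℝ>0-edge-labelled graph G contains a non-metric cycle (as a subgraph), then G contains an induced non-metric cycle. -/

import Mathlib

/-- An `ℝ>0`-edge-labelled graph: an irreflexive symmetric adjacency relation on the
vertex set together with a symmetric assignment of a positive real label to each edge. -/
structure ELGraph (V : Type*) where
  Adj : V → V → Prop
  label : V → V → ℝ
  adj_symm : ∀ x y, Adj x y → Adj y x
  adj_irrefl : ∀ x, ¬ Adj x x
  label_symm : ∀ x y, label x y = label y x
  label_pos : ∀ x y, Adj x y → 0 < label x y


/-- The cyclic successor of an index in `Fin n`. -/
def Fin.cycSucc {n : ℕ} (i : Fin n) : Fin n := ⟨(i.1 + 1) % n, Nat.mod_lt _ i.pos⟩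

namespace ELGraph

variable {V : Type*}

/-- A walk: a nonempty list of vertices with consecutive vertices joined by edges. -/
def IsWalk (G : ELGraph V) (l : List V) : Prop :=
  l ≠ [] ∧ l.Chain' G.Adj

/-- The length of a walk: the sum of the labels of its (consecutive) edges. -/
def walkLen (G : ELGraph V) (l : List V) : ℝ :=
  ((l.zip l.tail).map fun p => G.label p.1 p.2).sum

/-- A walk connecting `x` and `y`. -/
def IsWalkBetween (G : ELGraph V) (x y : V) (l : List V) : Prop :=
  G.IsWalk l ∧ l.head? = some x ∧ l.getLast? = some y

/-- A path connecting `x` and `y`: a walk with no repeated vertices. -/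
def IsPathBetween (G : ELGraph V) (x y : V) (l : List V) : Prop :=
  G.IsWalkBetween x y l ∧ l.Nodup

/-- `G` is connected: any two vertices are joined by a path. -/
def Connected (G : ELGraph V) : Prop :=
  ∀ x y, ∃ l, G.IsPathBetween x y l

/-- `d` is the shortest-path distance of `G`: `d x x = 0`, and for distinct `x, y`,
`d x y` is the minimum length of a path connecting `x` and `y`. -/
def IsShortestDist (G : ELGraph V) (d : V → V → ℝ) : Prop :=
  (∀ x, d x x = 0) ∧
  ∀ x y, x ≠ y →
    (∃ l, G.IsPathBetween x y l ∧ G.walkLen l = d x y) ∧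
    ∀ l, G.IsPathBetween x y l → d x y ≤ G.walkLen l

/-- A cycle on `n ≥ 3` vertices, given as an injective map `Fin n → V` with consecutive
vertices (cyclically, including the wrap-around pair) joined by edges. -/
def IsCycle (G : ELGraph V) {n : ℕ} (c : Fin n → V) : Prop :=
  3 ≤ n ∧ Function.Injective c ∧ ∀ i, G.Adj (c i) (c i.cycSucc)

/-- The total length of the `n` edges of a cycle. -/
noncomputable def cycleLen (G : ELGraph V) {n : ℕ} (c : Fin n → V) : ℝ :=
  ∑ i, G.label (c i) (c i.cycSucc)

/-- The edge of the cycle at position `i₀` is a long edge: its label is strictly greater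
than the sum of the labels of all the remaining edges of the cycle. -/
def IsLongEdge (G : ELGraph V) {n : ℕ} (c : Fin n → V) (i₀ : Fin n) : Prop :=
  G.cycleLen c - G.label (c i₀) (c i₀.cycSucc) < G.label (c i₀) (c i₀.cycSucc)

/-- A non-metric cycle: a cycle having a long edge. -/
def IsNonMetricCycle (G : ELGraph V) {n : ℕ} (c : Fin n → V) : Prop :=
  G.IsCycle c ∧ ∃ i₀, G.IsLongEdge c i₀

/-- An induced cycle: the only edges of `G` among its vertices are the cycle edges. -/
def IsInducedCycle (G : ELGraph V) {n : ℕ} (c : Fin n → V) : Prop :=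
  G.IsCycle c ∧ ∀ i j, G.Adj (c i) (c j) → j = i.cycSucc ∨ i = j.cycSucc

/-- An embedding of `A` into `B` as an induced subgraph: an injective map on vertices
such that two vertices are joined by an edge of label `ℓ` iff their images are. -/
def IsEmbedding {W : Type*} (A : ELGraph V) (B : ELGraph W) (e : V → W) : Prop :=
  Function.Injective e ∧
  ∀ x y, (A.Adj x y ↔ B.Adj (e x) (e y)) ∧ (A.Adj x y → B.label (e x) (e y) = A.label x y)

/-- An automorphism of `B`: a permutation of the vertices preserving edges, non-edges
and labels. -/
def IsAuto {W : Type*} (B : ELGraph W) (Φ : Equiv.Perm W) : Prop :=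
  ∀ x y, (B.Adj x y ↔ B.Adj (Φ x) (Φ y)) ∧ (B.Adj x y → B.label (Φ x) (Φ y) = B.label x y)

/-- A partial automorphism of `A` with domain `S`: an injective map preserving edges,
non-edges and labels. -/
def IsPartialAuto (A : ELGraph V) (S : Set V) (φ : S → V) : Prop :=
  Function.Injective φ ∧
  ∀ x y : S, (A.Adj x y ↔ A.Adj (φ x) (φ y)) ∧ (A.Adj x y → A.label (φ x) (φ y) = A.label x y)

end ELGraph

namespace ELGraph
variable {V : Type*}

lemma cycSucc_eq_add_one {n : ℕ} (hn : 2 ≤ n) (i : Fin n) :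
    haveI : NeZero n := ⟨by omega⟩
    i.cycSucc = i + 1 := by
  have : NeZero n := ⟨by omega⟩
  apply Fin.ext
  simp [Fin.cycSucc, Fin.add_def, Fin.val_one', Nat.mod_eq_of_lt (show 1 < n by omega)]

lemma split_lemma (G : ELGraph V) {n : ℕ} (c : Fin n → V) (hc : G.IsNonMetricCycle c)
    (k : Fin n) (hk2 : 2 ≤ k.val) (hkn : k.val ≤ n - 2)
    (hchord : G.Adj (c ⟨0, by omega⟩) (c k)) :
    ∃ m, m < n ∧ ∃ d : Fin m → V, G.IsNonMetricCycle d := by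
  obtain ⟨⟨hn3, hinj, hadjc⟩, i₀, hlong⟩ := hc
  have hn4 : 4 ≤ n := by omega
  have hklt : k.val < n := k.isLt
  set kv := k.val with hkv
  set m := n - kv with hmdef
  have hm2 : 2 ≤ m := by omega
  set e : ℕ → Fin n := fun t => ⟨t % n, Nat.mod_lt _ (by omega)⟩ with hedef
  have heval : ∀ t, (e t).val = t % n := fun _ => rfl
  have he_lt : ∀ t, t < n → (e t).val = t := fun t ht => by
    rw [heval, Nat.mod_eq_of_lt ht]
  have hek : e kv = k := Fin.ext (he_lt kv hklt)
  have he0 : e 0 = ⟨0, by omega⟩ := Fin.ext (he_lt 0 (by omega))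
  have hesucc : ∀ x, (e x).cycSucc = e (x + 1) := by
    intro x
    apply Fin.ext
    show ((e x).val + 1) % n = (x + 1) % n
    rw [heval, Nat.mod_add_mod]
  have hadje : ∀ x : ℕ, G.Adj (c (e x)) (c (e (x + 1))) := by
    intro x
    have := hadjc (e x)
    rwa [hesucc] at this
  set F : ℕ → ℝ := fun t => G.label (c (e t)) (c (e (t + 1))) with hFdef
  have hF : ∀ i : Fin n, G.label (c i) (c i.cycSucc) = F i.val := by
    intro i
    have h1 : e i.val = i := Fin.ext (he_lt _ i.isLt)
    show _ = G.label (c (e i.val)) (c (e (i.val + 1)))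
    rw [← hesucc, h1]
  have hclen : G.cycleLen c = ∑ t ∈ Finset.range n, F t := by
    rw [cycleLen, ← Fin.sum_univ_eq_sum_range]
    exact Finset.sum_congr rfl fun i _ => hF i
  have hsplitS : (∑ t ∈ Finset.range n, F t)
      = (∑ t ∈ Finset.range kv, F t) + ∑ t ∈ Finset.Ico kv n, F t := by
    simp only [Finset.range_eq_Ico]
    exact (Finset.sum_Ico_consecutive F (Nat.zero_le kv) hklt.le).symm
  have hlong' : (∑ t ∈ Finset.range kv, F t) + (∑ t ∈ Finset.Ico kv n, F t) - F i₀.val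
      < F i₀.val := by
    rw [IsLongEdge, hF i₀, hclen, hsplitS] at hlong
    exact hlong
  -- chord label
  have hlpos : 0 < G.label (c (e 0)) (c (e kv)) := by
    rw [he0, hek]; exact G.label_pos _ _ hchord
  -- ARC 1 : d1 on Fin (kv+1)
  have hd1cyc : G.IsCycle (fun t : Fin (kv + 1) => c (e t.val)) := by
    refine ⟨by omega, ?_, ?_⟩
    · intro s t h
      simp only at h
      have hs := s.isLt; have ht := t.isLt
      have := congrArg Fin.val (hinj h)
      rw [he_lt _ (by omega), he_lt _ (by omega)] at this
      exact Fin.ext this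
    · intro t
      have ht : t.val < kv + 1 := t.isLt
      simp only
      rcases lt_or_eq_of_le (Nat.lt_succ_iff.mp ht) with h | h
      · have h1 : (t.cycSucc).val = t.val + 1 := by
          show (t.val + 1) % (kv + 1) = t.val + 1
          exact Nat.mod_eq_of_lt (by omega)
        rw [h1]; exact hadje t.val
      · have h1 : (t.cycSucc).val = 0 := by
          show (t.val + 1) % (kv + 1) = 0
          rw [h]; exact Nat.mod_self _
        rw [h1, h, hek, he0]
        exact G.adj_symm _ _ hchord
  have hd1len : G.cycleLen (fun t : Fin (kv + 1) => c (e t.val))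
      = (∑ t ∈ Finset.range kv, F t) + G.label (c (e 0)) (c (e kv)) := by
    rw [cycleLen, Fin.sum_univ_castSucc]
    congr 1
    · rw [← Fin.sum_univ_eq_sum_range]
      refine Finset.sum_congr rfl fun t _ => ?_
      have ht := t.isLt
      have h1 : ((t.castSucc : Fin (kv + 1)).cycSucc).val = t.val + 1 := by
        show (t.val + 1) % (kv + 1) = t.val + 1
        exact Nat.mod_eq_of_lt (by omega)
      simp only [h1, Fin.coe_castSucc]
      rfl
    · have h1 : ((Fin.last kv).cycSucc).val = 0 := by
        show (kv + 1) % (kv + 1) = 0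
        exact Nat.mod_self _
      simp only [h1, Fin.val_last]
      rw [G.label_symm]
  -- ARC 2 : d2 on Fin (m+1)
  have hd2cyc : G.IsCycle (fun t : Fin (m + 1) => c (e (kv + t.val))) := by
    refine ⟨by omega, ?_, ?_⟩
    · intro s t h
      simp only at h
      have hs := s.isLt; have ht := t.isLt
      have h2 := congrArg Fin.val (hinj h)
      rw [heval, heval] at h2
      apply Fin.ext
      rcases Nat.lt_or_ge s.val m with hs' | hs' <;>
        rcases Nat.lt_or_ge t.val m with ht' | ht'
      · rw [Nat.mod_eq_of_lt (by omega), Nat.mod_eq_of_lt (by omega)] at h2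
        omega
      · have ht'' : t.val = m := by omega
        rw [Nat.mod_eq_of_lt (by omega), ht'', show kv + m = n by omega, Nat.mod_self] at h2
        omega
      · have hs'' : s.val = m := by omega
        rw [hs'', show kv + m = n by omega, Nat.mod_self, Nat.mod_eq_of_lt (by omega)] at h2
        omega
      · omega
    · intro t
      have ht : t.val < m + 1 := t.isLt
      simp only
      rcases lt_or_eq_of_le (Nat.lt_succ_iff.mp ht) with h | h
      · have h1 : (t.cycSucc).val = t.val + 1 := by
          show (t.val + 1) % (m + 1) = t.val + 1
          exact Nat.mod_eq_of_lt (by omega)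
        rw [h1, show kv + (t.val + 1) = kv + t.val + 1 by omega]
        exact hadje (kv + t.val)
      · have h1 : (t.cycSucc).val = 0 := by
          show (t.val + 1) % (m + 1) = 0
          rw [h]; exact Nat.mod_self _
        rw [h1, h]
        have h2 : e (kv + m) = e 0 := Fin.ext (by
          rw [heval, heval, show kv + m = n by omega, Nat.mod_self, Nat.zero_mod])
        rw [h2, Nat.add_zero, he0, hek]
        exact hchord
  have hd2len : G.cycleLen (fun t : Fin (m + 1) => c (e (kv + t.val)))
      = (∑ t ∈ Finset.Ico kv n, F t) + G.label (c (e 0)) (c (e kv)) := by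
    rw [cycleLen, Fin.sum_univ_castSucc]
    congr 1
    · have hIco : (∑ t ∈ Finset.Ico kv n, F t) = ∑ t ∈ Finset.range m, F (kv + t) := by
        rw [Finset.sum_Ico_eq_sum_range]
      rw [hIco, ← Fin.sum_univ_eq_sum_range]
      refine Finset.sum_congr rfl fun t _ => ?_
      have ht := t.isLt
      have h1 : ((t.castSucc : Fin (m + 1)).cycSucc).val = t.val + 1 := by
        show (t.val + 1) % (m + 1) = t.val + 1
        exact Nat.mod_eq_of_lt (by omega)
      simp only [h1, Fin.coe_castSucc]
      show G.label (c (e (kv + t.val))) (c (e (kv + (t.val + 1))))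
        = G.label (c (e (kv + t.val))) (c (e (kv + t.val + 1)))
      rw [show kv + (t.val + 1) = kv + t.val + 1 by omega]
    · have h1 : ((Fin.last m).cycSucc).val = 0 := by
        show (m + 1) % (m + 1) = 0
        exact Nat.mod_self _
      simp only [h1, Fin.val_last]
      have h2 : e (kv + m) = e 0 := Fin.ext (by
        rw [heval, heval, show kv + m = n by omega, Nat.mod_self, Nat.zero_mod])
      rw [h2, Nat.add_zero, G.label_symm]
  -- case analysis
  rcases Nat.lt_or_ge i₀.val kv with hi | hi
  · -- long edge in arc 1
    rcases lt_or_ge (∑ t ∈ Finset.Ico kv n, F t) (G.label (c (e 0)) (c (e kv))) with hcase | hcase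
    · -- d2 is non-metric with long edge the chord, at index Fin.last m
      refine ⟨m + 1, by omega, _, hd2cyc, Fin.last m, ?_⟩
      rw [IsLongEdge, hd2len]
      have h1 : ((Fin.last m).cycSucc).val = 0 := by
        show (m + 1) % (m + 1) = 0
        exact Nat.mod_self _
      have h2 : G.label (c (e (kv + (Fin.last m).val))) (c (e (kv + ((Fin.last m).cycSucc).val)))
          = G.label (c (e 0)) (c (e kv)) := by
        simp only [h1, Fin.val_last]
        have h3 : e (kv + m) = e 0 := Fin.ext (by
          rw [heval, heval, show kv + m = n by omega, Nat.mod_self, Nat.zero_mod])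
        rw [h3, Nat.add_zero, G.label_symm]
      rw [h2]
      linarith
    · -- d1 is non-metric with long edge at i₀
      refine ⟨kv + 1, by omega, _, hd1cyc, ⟨i₀.val, by omega⟩, ?_⟩
      rw [IsLongEdge, hd1len]
      have h1 : (((⟨i₀.val, by omega⟩ : Fin (kv + 1))).cycSucc).val = i₀.val + 1 := by
        show (i₀.val + 1) % (kv + 1) = i₀.val + 1
        exact Nat.mod_eq_of_lt (by omega)
      have h2 : G.label (c (e (⟨i₀.val, by omega⟩ : Fin (kv + 1)).val))
          (c (e (((⟨i₀.val, by omega⟩ : Fin (kv + 1))).cycSucc).val)) = F i₀.val := by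
        simp only [h1]
        rfl
      simp only at h2 ⊢
      rw [h2]
      linarith
  · -- long edge in arc 2
    rcases lt_or_ge (∑ t ∈ Finset.range kv, F t) (G.label (c (e 0)) (c (e kv))) with hcase | hcase
    · -- d1 is non-metric with long edge the chord, at index Fin.last kv
      refine ⟨kv + 1, by omega, _, hd1cyc, Fin.last kv, ?_⟩
      rw [IsLongEdge, hd1len]
      have h1 : ((Fin.last kv).cycSucc).val = 0 := by
        show (kv + 1) % (kv + 1) = 0
        exact Nat.mod_self _
      have h2 : G.label (c (e (Fin.last kv).val)) (c (e ((Fin.last kv).cycSucc).val))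
          = G.label (c (e 0)) (c (e kv)) := by
        simp only [h1, Fin.val_last]
        rw [G.label_symm]
      rw [h2]
      linarith
    · -- d2 is non-metric with long edge at i₀ - kv
      have hi₀ : i₀.val < n := i₀.isLt
      refine ⟨m + 1, by omega, _, hd2cyc, ⟨i₀.val - kv, by omega⟩, ?_⟩
      rw [IsLongEdge, hd2len]
      have h1 : (((⟨i₀.val - kv, by omega⟩ : Fin (m + 1))).cycSucc).val = i₀.val - kv + 1 := by
        show (i₀.val - kv + 1) % (m + 1) = i₀.val - kv + 1
        exact Nat.mod_eq_of_lt (by omega)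
      have h2 : G.label (c (e (kv + (⟨i₀.val - kv, by omega⟩ : Fin (m + 1)).val)))
          (c (e (kv + (((⟨i₀.val - kv, by omega⟩ : Fin (m + 1))).cycSucc).val))) = F i₀.val := by
        simp only [h1]
        rw [show kv + (i₀.val - kv) = i₀.val by omega,
          show kv + (i₀.val - kv + 1) = i₀.val + 1 by omega]
      simp only at h2 ⊢
      rw [h2]
      linarith

end ELGraph

namespace ELGraph
variable {V : Type*}

lemma rot_nonmetric {n : ℕ} (G : ELGraph V) {c : Fin n → V}
    (hc : G.IsNonMetricCycle c) (a : Fin n) :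
    G.IsNonMetricCycle (fun t => c (t + a)) := by
  obtain ⟨⟨hn3, hinj, hadjc⟩, i₀, hlong⟩ := hc
  have hn2 : 2 ≤ n := by omega
  have : NeZero n := ⟨by omega⟩
  have hkey : ∀ t : Fin n, t.cycSucc + a = (t + a).cycSucc := by
    intro t
    rw [cycSucc_eq_add_one hn2, cycSucc_eq_add_one hn2, add_right_comm]
  have hlen : G.cycleLen (fun t => c (t + a)) = G.cycleLen c := by
    rw [cycleLen, cycleLen]
    refine Fintype.sum_equiv (Equiv.addRight a) _ _ fun t => ?_
    simp only [Equiv.coe_addRight]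
    rw [← hkey]
  refine ⟨⟨hn3, ?_, ?_⟩, i₀ - a, ?_⟩
  · intro s t h
    simp only at h
    have := hinj h
    exact add_right_cancel this
  · intro t
    simp only
    rw [hkey]
    exact hadjc (t + a)
  · rw [IsLongEdge, hlen]
    show G.cycleLen c - G.label (c (i₀ - a + a)) (c ((i₀ - a).cycSucc + a)) < _
    rw [hkey, sub_add_cancel]
    exact hlong

lemma exists_induced_aux (G : ELGraph V) :
    ∀ (n : ℕ) (c : Fin n → V), G.IsNonMetricCycle c →
      ∃ (m : ℕ) (c' : Fin m → V), G.IsInducedCycle c' ∧ G.IsNonMetricCycle c' := by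
  intro n
  induction n using Nat.strong_induction_on with
  | _ n ih =>
    intro c hc
    by_cases hind : ∀ i j, G.Adj (c i) (c j) → j = i.cycSucc ∨ i = j.cycSucc
    · exact ⟨n, c, ⟨hc.1, hind⟩, hc⟩
    · push_neg at hind
      obtain ⟨i, j, hadj, hji, hij⟩ := hind
      have hn3 : 3 ≤ n := hc.1.1
      have : NeZero n := ⟨by omega⟩
      have hrot := G.rot_nonmetric hc i
      have hne : i ≠ j := fun h => G.adj_irrefl _ (h ▸ hadj)
      have hv1 : (1 : Fin n).val = 1 := by
        rw [Fin.val_one']; exact Nat.mod_eq_of_lt (by omega)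
      have hk0 : (j - i).val ≠ 0 := by
        intro h
        exact hne (sub_eq_zero.mp (Fin.ext h : j - i = (0 : Fin n))).symm
      have hk1 : (j - i).val ≠ 1 := by
        intro h
        apply hji
        have h1 : j - i = 1 := Fin.ext (by rw [hv1]; exact h)
        rw [cycSucc_eq_add_one (by omega), ← h1]
        abel
      have hkn1 : (j - i).val ≠ n - 1 := by
        intro h
        apply hij
        have h1 : j - i + 1 = 0 := by
          apply Fin.ext
          rw [Fin.add_def, hv1, h]
          simp [Nat.sub_add_cancel (show 1 ≤ n by omega)]
        have h2 : i = j + 1 := by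
          have h3 : j + 1 - i = 0 := by rw [← h1]; abel
          exact (sub_eq_zero.mp h3).symm
        rw [cycSucc_eq_add_one (by omega), ← h2]
      have hk2 : 2 ≤ (j - i).val := by omega
      have hkn : (j - i).val ≤ n - 2 := by have := (j - i).isLt; omega
      have hchord' : G.Adj ((fun t => c (t + i)) ⟨0, by omega⟩) ((fun t => c (t + i)) (j - i)) := by
        simp only
        have h0 : (⟨0, by omega⟩ : Fin n) + i = i := by
          apply Fin.ext
          rw [Fin.add_def]
          simp [Nat.mod_eq_of_lt i.isLt]
        rw [h0, sub_add_cancel]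
        exact hadj
      obtain ⟨m, hm, d, hd⟩ := G.split_lemma _ hrot (j - i) hk2 hkn hchord'
      exact ih m hm d hd

end ELGraph

/-- If an `ℝ>0`-edge-labelled graph `G` contains a non-metric cycle, then `G` contains an
induced non-metric cycle. -/
theorem contains_induced_nonmetric_cycle {V : Type*} [Fintype V] (G : ELGraph V)
    {n : ℕ} (c : Fin n → V) (hc : G.IsNonMetricCycle c) :
    ∃ (m : ℕ) (c' : Fin m → V), G.IsInducedCycle c' ∧ G.IsNonMetricCycle c' :=
  G.exists_induced_aux n c hc
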